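/- For all real numbers d, e, f there exist real numbers a, b such that, in the algebra ℍ of real quaternions, the element q := exp(a·i + b·j) satisfies q · ( √(d² + e² + f²) · i ) · q⁻¹ = d·i + e·j + f·k. -/

import Mathlib

/-- The imaginary unit `i` of the real quaternions. -/
def quatI : Quaternion ℝ := ⟨0, 1, 0, 0⟩

/-- The imaginary unit `j` of the real quaternions. -/
def quatJ : Quaternion ℝ := ⟨0, 0, 1, 0⟩

/-- The imaginary unit `k` of the real quaternions. -/
def quatK : Quaternion ℝ := ⟨0, 0, 0, 1⟩

/-- Helper constructor landing in `Quaternion ℝ` (keeps instances findable). -/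
def qmk (r x y z : ℝ) : Quaternion ℝ := ⟨r, x, y, z⟩

@[simp] lemma qmk_re (r x y z : ℝ) : (qmk r x y z).re = r := rfl
@[simp] lemma qmk_imI (r x y z : ℝ) : (qmk r x y z).imI = x := rfl
@[simp] lemma qmk_imJ (r x y z : ℝ) : (qmk r x y z).imJ = y := rfl
@[simp] lemma qmk_imK (r x y z : ℝ) : (qmk r x y z).imK = z := rfl

lemma exp_pure (a b : ℝ) :
    NormedSpace.exp (qmk 0 a b 0) =
      (Real.cos (Real.sqrt (a^2+b^2)) : Quaternion ℝ)
        + (Real.sin (Real.sqrt (a^2+b^2)) / Real.sqrt (a^2+b^2)) • qmk 0 a b 0 := by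
  have h := Quaternion.exp_of_re_eq_zero (qmk 0 a b 0) rfl
  have hn : ‖qmk 0 a b 0‖ = Real.sqrt (a^2+b^2) := by
    have h1 : ‖qmk 0 a b 0‖^2 = a^2+b^2 := by
      rw [sq, ← Quaternion.normSq_eq_norm_mul_self, Quaternion.normSq_def']
      simp
    rw [← h1, Real.sqrt_sq (norm_nonneg _)]
  rw [h, hn]

lemma smul_IJ (a b : ℝ) : a • quatI + b • quatJ = qmk 0 a b 0 := by
  ext <;> simp <;> simp [quatI, quatJ, qmk]

lemma smul_IJK (d e f : ℝ) : d • quatI + e • quatJ + f • quatK = qmk 0 d e f := by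
  ext <;> simp <;> simp [quatI, quatJ, quatK, qmk]

lemma smul_I (c : ℝ) : c • quatI = qmk 0 c 0 0 := by
  ext <;> simp <;> simp [quatI, qmk]

/-- Every pure-imaginary quaternion `d·i + e·j + f·k` is the image of `c·i`,
`c = √(d²+e²+f²)`, under conjugation by `exp(a·i + b·j)` for suitable `a, b ∈ ℝ`
(Claim inside the proof of Theorem 6.12 of the paper). -/
theorem stmt_5 (d e f : ℝ) :
    ∃ a b : ℝ,
      (NormedSpace.exp (a • quatI + b • quatJ)) *
          (Real.sqrt (d ^ 2 + e ^ 2 + f ^ 2) • quatI) *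
          (NormedSpace.exp (a • quatI + b • quatJ))⁻¹
        = d • quatI + e • quatJ + f • quatK := by
  obtain ⟨c, hcdef⟩ : ∃ c, c = Real.sqrt (d ^ 2 + e ^ 2 + f ^ 2) := ⟨_, rfl⟩
  rw [← hcdef]
  have hc0 : 0 ≤ c := hcdef ▸ Real.sqrt_nonneg _
  have hc2 : c ^ 2 = d ^ 2 + e ^ 2 + f ^ 2 := hcdef ▸ Real.sq_sqrt (by positivity)
  by_cases hcase : e = 0 ∧ f = 0 ∧ 0 ≤ d
  · obtain ⟨he, hf, hd⟩ := hcase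
    have hcd : c = d := by
      rw [hcdef, he, hf]
      simpa using Real.sqrt_sq hd
    refine ⟨0, 0, ?_⟩
    rw [smul_IJ]
    have h0 : qmk 0 0 0 0 = 0 := by ext <;> simp <;> rfl
    rw [h0, NormedSpace.exp_zero, he, hf, hcd]
    simp
  · -- main case
    have habs : |d| ≤ c := by
      rw [← Real.sqrt_sq_eq_abs, hcdef]
      exact Real.sqrt_le_sqrt (by nlinarith)
    have hcd : d < c := by
      rcases lt_or_eq_of_le ((le_abs_self d).trans habs) with h | h
      · exact h
      · exfalso
        have hd0 : 0 ≤ d := by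
          rcases abs_cases d with ⟨_, h2⟩ | ⟨h1, _⟩
          · exact h2
          · nlinarith
        exact hcase ⟨by nlinarith [sq_nonneg e, sq_nonneg f],
          by nlinarith [sq_nonneg e, sq_nonneg f], hd0⟩
    have hc : 0 < c := by
      rcases abs_cases d with ⟨h1, h2⟩ | ⟨h1, h2⟩ <;> linarith
    have hcne : c ≠ 0 := ne_of_gt hc
    obtain ⟨B, hBdef⟩ : ∃ B, B = Real.sqrt ((c - d) / (2 * c)) := ⟨_, rfl⟩
    have hBpos : 0 < B := hBdef ▸ Real.sqrt_pos.2 (div_pos (by linarith) (by linarith))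
    have hB2 : B ^ 2 = (c - d) / (2 * c) :=
      hBdef ▸ Real.sq_sqrt (le_of_lt (div_pos (by linarith) (by linarith)))
    have hBne : B ≠ 0 := ne_of_gt hBpos
    obtain ⟨A, hAdef⟩ : ∃ A, A = e / (2 * c * B) := ⟨_, rfl⟩
    obtain ⟨C, hCdef⟩ : ∃ C, C = -f / (2 * c * B) := ⟨_, rfl⟩
    have hE3 : 2 * c * B ^ 2 = c - d := by
      rw [hB2]; field_simp
    have hE1 : 2 * c * B * A = e := by
      rw [hAdef]; field_simp
    have hE2 : 2 * c * B * C = -f := by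
      rw [hCdef]; field_simp
    have hXne : (2 * c * B) ^ 2 ≠ 0 :=
      pow_ne_zero 2 (mul_ne_zero (mul_ne_zero two_ne_zero hcne) hBne)
    have hS : A ^ 2 + B ^ 2 + C ^ 2 = 1 := by
      have hmul : (2 * c * B) ^ 2 * (A ^ 2 + B ^ 2 + C ^ 2) = (2 * c * B) ^ 2 * 1 := by
        linear_combination (2 * c * B * A + e) * hE1 + (2 * c * B * C - f) * hE2 +
          (2 * c * B ^ 2 - c - d) * hE3 - hc2
      exact mul_left_cancel₀ hXne hmul
    have hC1 : -1 ≤ C := by nlinarith [sq_nonneg (C + 1), sq_nonneg A, sq_nonneg B]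
    have hC2 : C ≤ 1 := by nlinarith [sq_nonneg (C - 1), sq_nonneg A, sq_nonneg B]
    obtain ⟨t, htdef⟩ : ∃ t, t = Real.arccos C := ⟨_, rfl⟩
    have hcos : Real.cos t = C := htdef ▸ Real.cos_arccos hC1 hC2
    have hsin2 : Real.sin t ^ 2 = A ^ 2 + B ^ 2 := by
      rw [htdef, Real.sin_arccos, Real.sq_sqrt (by nlinarith)]
      linarith
    have hsinpos : 0 < Real.sin t := by
      have h1 : 0 ≤ Real.sin t := htdef ▸ Real.sin_nonneg_of_nonneg_of_le_pi
        (Real.arccos_nonneg C) (Real.arccos_le_pi C)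
      rcases lt_or_eq_of_le h1 with h | h
      · exact h
      · exfalso; nlinarith [sq_nonneg A]
    have hsne : Real.sin t ≠ 0 := ne_of_gt hsinpos
    have htne : t ≠ 0 := by
      intro h; rw [h] at hsinpos; simp at hsinpos
    have ht0 : 0 ≤ t := htdef ▸ Real.arccos_nonneg C
    refine ⟨A * t / Real.sin t, B * t / Real.sin t, ?_⟩
    rw [smul_IJ]
    obtain ⟨a, hadef⟩ : ∃ a, a = A * t / Real.sin t := ⟨_, rfl⟩
    obtain ⟨b, hbdef⟩ : ∃ b, b = B * t / Real.sin t := ⟨_, rfl⟩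
    rw [← hadef, ← hbdef]
    have hab : a ^ 2 + b ^ 2 = t ^ 2 := by
      rw [hadef, hbdef]
      field_simp
      linear_combination (-1) * hsin2
    have hsq : Real.sqrt (a ^ 2 + b ^ 2) = t := by
      rw [hab, Real.sqrt_sq ht0]
    have hexp : NormedSpace.exp (qmk 0 a b 0) = qmk C A B 0 := by
      rw [exp_pure, hsq]
      ext <;> simp
      · exact hcos
      · rw [hadef]; field_simp
      · rw [hbdef]; field_simp
    rw [hexp, smul_I, smul_IJK]
    have hQne : qmk C A B 0 ≠ 0 := by
      intro h
      have := congrArg QuaternionAlgebra.imJ h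
      simp at this
      exact hBne this
    rw [mul_inv_eq_iff_eq_mul₀ hQne]
    ext <;> simp only [Quaternion.re_mul, Quaternion.imI_mul, Quaternion.imJ_mul,
      Quaternion.imK_mul, qmk_re, qmk_imI, qmk_imJ, qmk_imK]
    · linear_combination (-B) * hE1 + A * hE3
    · linear_combination B * hE2 - C * hE3
    · linear_combination C * hE1 - A * hE2
    · linear_combination (-A) * hE1 + (-C) * hE2 + (-B) * hE3 + (2 * c * B) * hS
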